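/- Let G be a finite group, N ⊴ G a normal subgroup of index prime to p, and P ≤ N a p-subgroup. Then P is a radical p-subgroup of N if and only if P is a radical p-subgroup of G. -/

import Mathlib

/-- The subgroup of `G` generated by all subgroups of `N` that are `p`-groups and
are normalized by `N`, i.e. `O_p(N)`, the largest normal `p`-subgroup of `N`. -/
def relPCore (p : ℕ) {G : Type*} [Group G] (N : Subgroup G) : Subgroup G :=
  sSup {Q : Subgroup G | Q ≤ N ∧ IsPGroup p Q ∧ ∀ n ∈ N, ∀ x ∈ Q, n * x * n⁻¹ ∈ Q}

section Aux

variable {G : Type*} [Group G] {p : ℕ}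

/-- The defining set of `relPCore`. -/
def pSet (p : ℕ) (N : Subgroup G) : Set (Subgroup G) :=
  {Q : Subgroup G | Q ≤ N ∧ IsPGroup p Q ∧ ∀ n ∈ N, ∀ x ∈ Q, n * x * n⁻¹ ∈ Q}

lemma relPCore_eq_sSup (N : Subgroup G) : relPCore p N = sSup (pSet p N) := rfl

lemma le_relPCore {N Q : Subgroup G} (h : Q ∈ pSet p N) : Q ≤ relPCore p N := le_sSup h

lemma pSet_sup {N Q₁ Q₂ : Subgroup G} (h1 : Q₁ ∈ pSet p N) (h2 : Q₂ ∈ pSet p N) :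
    Q₁ ⊔ Q₂ ∈ pSet p N := by
  refine ⟨sup_le h1.1 h2.1, IsPGroup.to_sup_of_normal_right' h1.2.1 h2.2.1 ?_, ?_⟩
  · intro x hx
    rw [Subgroup.mem_normalizer_iff]
    intro y
    constructor
    · intro hy; exact h2.2.2 x (h1.1 hx) y hy
    · intro hy
      have := h2.2.2 x⁻¹ (inv_mem (h1.1 hx)) _ hy
      simpa [mul_assoc] using this
  · intro n hn x hx
    have hmap : (Q₁ ⊔ Q₂).map (MulAut.conj n).toMonoidHom ≤ Q₁ ⊔ Q₂ := by
      rw [Subgroup.map_sup]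
      refine sup_le (le_trans ?_ le_sup_left) (le_trans ?_ le_sup_right)
      · rintro y ⟨z, hz, rfl⟩
        simpa [MulAut.conj_apply] using h1.2.2 n hn z hz
      · rintro y ⟨z, hz, rfl⟩
        simpa [MulAut.conj_apply] using h2.2.2 n hn z hz
    have : n * x * n⁻¹ ∈ (Q₁ ⊔ Q₂).map (MulAut.conj n).toMonoidHom :=
      ⟨x, hx, by simp [MulAut.conj_apply]⟩
    exact hmap this

lemma relPCore_mem [Finite G] (N : Subgroup G) : relPCore p N ∈ pSet p N := by
  have hbot : (⊥ : Subgroup G) ∈ pSet p N := ⟨bot_le, IsPGroup.of_bot, by simp⟩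
  have hfin : (pSet p N).Finite := Set.toFinite _
  have hne : hfin.toFinset.Nonempty := ⟨⊥, hfin.mem_toFinset.2 hbot⟩
  have heq : relPCore p N = hfin.toFinset.sup' hne id := by
    rw [relPCore_eq_sSup, Finset.sup'_eq_sup, Finset.sup_id_eq_sSup, hfin.coe_toFinset]
  rw [heq]
  exact Finset.sup'_mem _ (fun a ha b hb => pSet_sup ha hb) _ _ _
    (fun i hi => hfin.mem_toFinset.1 hi)

end Aux

/-- Let `N ⊴ G` be of index prime to `p` and `P ≤ N` a `p`-subgroup. Then `P` is a
radical `p`-subgroup of `N` (i.e. `O_p(N_N(P)) = P`) if and only if `P` is a radical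
`p`-subgroup of `G` (i.e. `O_p(N_G(P)) = P`). -/
theorem stmt6 {G : Type*} [Group G] [Finite G] (p : ℕ) (hp : p.Prime)
    (N : Subgroup G) [N.Normal] (hidx : ¬ p ∣ N.index)
    (P : Subgroup G) (hPN : P ≤ N) (hP : IsPGroup p P) :
    relPCore p (N ⊓ Subgroup.normalizer (P : Set G)) = P ↔ relPCore p (Subgroup.normalizer (P : Set G)) = P := by
  have hPH : P ≤ Subgroup.normalizer (P : Set G) := Subgroup.le_normalizer
  have hPmemH : P ∈ pSet p (Subgroup.normalizer (P : Set G)) :=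
    ⟨hPH, hP, fun n hn x hx => ((Subgroup.mem_normalizer_iff.1 hn) x).1 hx⟩
  have hPmemM : P ∈ pSet p (N ⊓ Subgroup.normalizer (P : Set G)) :=
    ⟨le_inf hPN hPH, hP, fun n hn => hPmemH.2.2 n hn.2⟩
  constructor
  · -- radical in N → radical in G
    intro h
    have hQ := relPCore_mem (p := p) (Subgroup.normalizer (P : Set G))
    -- relPCore p (Subgroup.normalizer (P : Set G)) ≤ N, since its image in G/N is a p-group in a group
    -- of order prime to p
    have hQN : relPCore p (Subgroup.normalizer (P : Set G)) ≤ N := by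
      intro x hx
      obtain ⟨k, hk⟩ := hQ.2.1 ⟨x, hx⟩
      have hxk : x ^ (p ^ k) = 1 := by
        have := congrArg (Subgroup.subtype _) hk
        simpa using this
      rw [← QuotientGroup.eq_one_iff]
      have h1 : ((x : G ⧸ N)) ^ (p ^ k) = 1 := by
        rw [← QuotientGroup.mk_pow, hxk]; rfl
      have h2 : orderOf ((x : G) : G ⧸ N) ∣ p ^ k := orderOf_dvd_of_pow_eq_one h1
      have h3 : orderOf ((x : G) : G ⧸ N) ∣ N.index := by
        simpa [Subgroup.index] using orderOf_dvd_natCard ((x : G) : G ⧸ N)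
      have hcop : Nat.Coprime (p ^ k) N.index :=
        Nat.Coprime.pow_left k ((Nat.Prime.coprime_iff_not_dvd hp).2 hidx)
      have : orderOf ((x : G) : G ⧸ N) = 1 :=
        Nat.eq_one_of_dvd_coprimes hcop h2 h3
      exact orderOf_eq_one_iff.1 this
    have hmem : relPCore p (Subgroup.normalizer (P : Set G)) ∈ pSet p (N ⊓ Subgroup.normalizer (P : Set G)) :=
      ⟨le_inf hQN hQ.1, hQ.2.1, fun n hn => hQ.2.2 n hn.2⟩
    exact le_antisymm ((le_relPCore hmem).trans h.le) (le_relPCore hPmemH)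
  · -- radical in G → radical in N
    intro h
    have hQ := relPCore_mem (p := p) (N ⊓ Subgroup.normalizer (P : Set G))
    -- relPCore p (N ⊓ H) is normalized by all of H = normalizer P
    have hnorm : ∀ n ∈ Subgroup.normalizer (P : Set G), ∀ x ∈ relPCore p (N ⊓ Subgroup.normalizer (P : Set G)),
        n * x * n⁻¹ ∈ relPCore p (N ⊓ Subgroup.normalizer (P : Set G)) := by
      intro n hn x hx
      have key : (relPCore p (N ⊓ Subgroup.normalizer (P : Set G))).map (MulAut.conj n).toMonoidHom ≤
          relPCore p (N ⊓ Subgroup.normalizer (P : Set G)) := by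
        rw [relPCore_eq_sSup, (Subgroup.gc_map_comap _).l_sSup]
        refine iSup_le fun Q => iSup_le fun hQ' => ?_
        apply le_relPCore
        refine ⟨?_, hQ'.2.1.map _, ?_⟩
        · rintro y ⟨z, hz, rfl⟩
          have hzM := hQ'.1 hz
          refine ⟨?_, ?_⟩
          · simpa [MulAut.conj_apply] using Subgroup.Normal.conj_mem ‹N.Normal› z hzM.1 n
          · simpa [MulAut.conj_apply] using mul_mem (mul_mem hn hzM.2) (inv_mem hn)
        · rintro m hm _ ⟨z, hz, rfl⟩
          have hm' : n⁻¹ * m * n ∈ N ⊓ Subgroup.normalizer (P : Set G) := by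
            rw [Subgroup.mem_inf]
            constructor
            · have := Subgroup.Normal.conj_mem ‹N.Normal› m hm.1 n⁻¹
              simpa using this
            · exact mul_mem (mul_mem (inv_mem hn) hm.2) hn
          have hin : (n⁻¹ * m * n) * z * (n⁻¹ * m * n)⁻¹ ∈ Q := hQ'.2.2 _ hm' z hz
          refine ⟨(n⁻¹ * m * n) * z * (n⁻¹ * m * n)⁻¹, hin, ?_⟩
          simp only [MulEquiv.coe_toMonoidHom, MulAut.conj_apply]
          group
      have : n * x * n⁻¹ ∈ (relPCore p (N ⊓ Subgroup.normalizer (P : Set G))).map (MulAut.conj n).toMonoidHom :=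
        ⟨x, hx, by simp [MulAut.conj_apply]⟩
      exact key this
    have hmem : relPCore p (N ⊓ Subgroup.normalizer (P : Set G)) ∈ pSet p (Subgroup.normalizer (P : Set G)) :=
      ⟨hQ.1.trans inf_le_right, hQ.2.1, hnorm⟩
    exact le_antisymm ((le_relPCore hmem).trans h.le) (le_relPCore hPmemM)
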